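/- arXiv:1402.3747 — 2 statements merged into one kernel-verified Lean document; each statement's English description precedes it below -/
import Mathlib

section
/- There exist sets A, B, C ⊆ ℕ such that B generically computes A, C generically computes B, but C does not generically compute A; in other words, relative generic computation is not transitive. -/
open Filter Topology

/-- `A ⊆ ℕ` has density 1 if the densities of its initial segments tend to 1. -/
def Density1 (A : Set ℕ) : Prop :=
  Tendsto (fun n : ℕ => ((A ∩ Set.Iio n).ncard : ℝ) / n) atTop (𝓝 1)

/-- The length-`k` initial segment of an oracle `X : ℕ → ℕ`. -/
def oracleSeg (X : ℕ → ℕ) (k : ℕ) : List ℕ := List.ofFn (fun i : Fin k => X i)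

/-- A Turing functional, presented by a partial computable, monotone map on
finite oracle strings (the "use" presentation). -/
structure TuringFunctional where
  f : List ℕ → ℕ →. ℕ
  computable : Partrec₂ f
  mono : ∀ σ τ : List ℕ, σ <+: τ → ∀ n m, m ∈ f σ n → m ∈ f τ n

/-- Evaluation of a Turing functional on a total oracle `X : ℕ → ℕ`. -/
noncomputable def TuringFunctional.eval (φ : TuringFunctional) (X : ℕ → ℕ) (n : ℕ) :
    Part ℕ :=
  ⟨∃ k, ((φ.f (oracleSeg X k) n).Dom),
   fun h => (φ.f (oracleSeg X h.choose) n).get h.choose_spec⟩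

open Classical in
/-- The characteristic function of a set of naturals. -/
noncomputable def setChar (A : Set ℕ) : ℕ → ℕ := fun n => if n ∈ A then 1 else 0

/-- Evaluation of a Turing functional with a set of naturals as (total) oracle. -/
noncomputable def TuringFunctional.evalSet (φ : TuringFunctional) (O : Set ℕ) : ℕ →. ℕ :=
  fun n => φ.eval (setChar O) n

/-- A partial function is a generic computation of `A` if its domain has density 1,
its values lie in `{0,1}`, and it is correct about `A` wherever it halts. -/
def IsGenericComputation (f : ℕ →. ℕ) (A : Set ℕ) : Prop :=
  Density1 f.Dom ∧ ∀ n m, m ∈ f n → (n ∈ A ∧ m = 1) ∨ (n ∉ A ∧ m = 0)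

/-- A (time-dependent) partial oracle for `A`: a set of coded triples `⟨n,x,l⟩`
which never lies about membership in `A`. -/
def IsPartialOracle (O A : Set ℕ) : Prop :=
  (∀ n l, Nat.pair n (Nat.pair 0 l) ∈ O → n ∉ A) ∧
  (∀ n l, Nat.pair n (Nat.pair 1 l) ∈ O → n ∈ A)

/-- The domain of a partial oracle. -/
def oracleDomain (O : Set ℕ) : Set ℕ :=
  {n | ∃ x l, Nat.pair n (Nat.pair x l) ∈ O}

/-- A generic oracle for `A` is a partial oracle for `A` with density-1 domain. -/
def IsGenericOracle (O A : Set ℕ) : Prop :=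
  IsPartialOracle O A ∧ Density1 (oracleDomain O)

/-- `A` is (uniformly) generically reducible to `B`:  `B ≥_g A`. -/
def GenRedTo (A B : Set ℕ) : Prop :=
  ∃ φ : TuringFunctional, ∀ O : Set ℕ, IsGenericOracle O B →
    IsGenericComputation (φ.evalSet O) A

/-- Generic equivalence `A ≡_g B`. -/
def GenEquiv (A B : Set ℕ) : Prop := GenRedTo A B ∧ GenRedTo B A

/-- `B` generically computes `A`. -/
def GenericallyComputes (B A : Set ℕ) : Prop :=
  ∃ φ : TuringFunctional, IsGenericComputation (φ.evalSet B) A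

/-- `A` is generically computable. -/
def GenericallyComputable (A : Set ℕ) : Prop :=
  ∃ f : ℕ →. ℕ, Partrec f ∧ IsGenericComputation f A

/-- Turing reducibility `A ≤_T B` for sets of naturals. -/
def TuringRedTo (A B : Set ℕ) : Prop :=
  ∃ φ : TuringFunctional, ∀ n, φ.evalSet B n = Part.some (setChar A n)

/-- The embedding `X ↦ R(X)` of Turing degrees into generic degrees. -/
def RSet (X : Set ℕ) : Set ℕ := {n | ∃ m k, m ∈ X ∧ Odd k ∧ n = 2 ^ m * k}

/-- The recursive join of two sets. -/
def setJoin (A B : Set ℕ) : Set ℕ :=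
  {n | (∃ k, n = 2 * k ∧ k ∈ A) ∨ (∃ k, n = 2 * k + 1 ∧ k ∈ B)}

/-! ### Auxiliary material -/

section Aux

open Nat.Partrec (Code)
open Nat.Partrec.Code

/-! #### Basic facts about `oracleSeg` and `eval` -/

lemma oracleSeg_prefix (X : ℕ → ℕ) {a b : ℕ} (h : a ≤ b) :
    oracleSeg X a <+: oracleSeg X b := by
  rw [List.prefix_iff_eq_take]
  apply List.ext_getElem
  · simp [oracleSeg, h]
  · intro i h1 h2
    simp [oracleSeg, List.getElem_take]

lemma oracleSeg_getElem? (X : ℕ → ℕ) {i j : ℕ} (h : i < j) :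
    (oracleSeg X j)[i]? = some (X i) := by
  simp [oracleSeg, List.getElem?_ofFn, List.ofFnNthVal, h]

lemma f_agree (φ : TuringFunctional) (X : ℕ → ℕ) {a b n m m' : ℕ}
    (h1 : m ∈ φ.f (oracleSeg X a) n) (h2 : m' ∈ φ.f (oracleSeg X b) n) : m = m' := by
  rcases le_total a b with h | h
  · exact Part.mem_unique (φ.mono _ _ (oracleSeg_prefix X h) n m h1) h2
  · exact Part.mem_unique h1 (φ.mono _ _ (oracleSeg_prefix X h) n m' h2)

lemma mem_eval_iff (φ : TuringFunctional) (X : ℕ → ℕ) (n m : ℕ) :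
    m ∈ φ.eval X n ↔ ∃ j, m ∈ φ.f (oracleSeg X j) n := by
  constructor
  · rintro ⟨h, rfl⟩
    exact ⟨h.choose, Part.get_mem h.choose_spec⟩
  · rintro ⟨j, hm⟩
    have hdom : ∃ k, (φ.f (oracleSeg X k) n).Dom := ⟨j, Part.dom_iff_mem.2 ⟨m, hm⟩⟩
    refine ⟨hdom, ?_⟩
    exact (f_agree φ X (Part.get_mem hdom.choose_spec) hm).symm ▸ rfl

lemma eval_dom_iff (φ : TuringFunctional) (X : ℕ → ℕ) (n : ℕ) :
    (φ.eval X n).Dom ↔ ∃ j, (φ.f (oracleSeg X j) n).Dom := Iff.rfl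

/-! #### `ncard` facts -/

lemma ncard_Iio (n : ℕ) : (Set.Iio n).ncard = n := by
  rw [← Finset.coe_Iio, Set.ncard_coe_finset, Nat.card_Iio]

lemma ncard_split (S : Set ℕ) (n : ℕ) :
    (S ∩ Set.Iio n).ncard + (Sᶜ ∩ Set.Iio n).ncard = n := by
  have hd : Disjoint (S ∩ Set.Iio n) (Sᶜ ∩ Set.Iio n) := by
    apply Set.disjoint_left.2
    rintro x ⟨hx, -⟩ ⟨hx', -⟩
    exact hx' hx
  have hu : (S ∩ Set.Iio n) ∪ (Sᶜ ∩ Set.Iio n) = Set.Iio n := by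
    rw [← Set.union_inter_distrib_right, Set.union_compl_self, Set.univ_inter]
  have h1 : (S ∩ Set.Iio n).Finite := (Set.finite_Iio n).inter_of_right _
  have h2 : (Sᶜ ∩ Set.Iio n).Finite := (Set.finite_Iio n).inter_of_right _
  rw [← Set.ncard_union_eq hd h1 h2, hu, ncard_Iio]

lemma density1_iff_compl (S : Set ℕ) :
    Density1 S ↔ Tendsto (fun n : ℕ => ((Sᶜ ∩ Set.Iio n).ncard : ℝ) / n) atTop (𝓝 0) := by
  have key : ∀ᶠ n : ℕ in atTop,
      ((S ∩ Set.Iio n).ncard : ℝ) / n = 1 - ((Sᶜ ∩ Set.Iio n).ncard : ℝ) / n := by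
    filter_upwards [eventually_ge_atTop 1] with n hn
    have h := ncard_split S n
    have hn' : (n : ℝ) ≠ 0 := by positivity
    field_simp
    have : ((S ∩ Set.Iio n).ncard : ℝ) + ((Sᶜ ∩ Set.Iio n).ncard : ℝ) = n := by
      exact_mod_cast congrArg (Nat.cast : ℕ → ℝ) h
    linarith
  constructor
  · intro h
    have : Tendsto (fun n : ℕ => 1 - ((S ∩ Set.Iio n).ncard : ℝ) / n) atTop (𝓝 (1 - 1)) :=
      tendsto_const_nhds.sub h
    rw [sub_self] at this
    apply this.congr'
    filter_upwards [key] with n hn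
    rw [hn]; ring
  · intro h
    have : Tendsto (fun n : ℕ => 1 - ((Sᶜ ∩ Set.Iio n).ncard : ℝ) / n) atTop (𝓝 (1 - 0)) :=
      tendsto_const_nhds.sub h
    rw [sub_zero] at this
    exact this.congr' (by filter_upwards [key] with n hn; rw [hn])

lemma density1_univ : Density1 (Set.univ : Set ℕ) := by
  rw [density1_iff_compl]
  have : ∀ n : ℕ, (((Set.univ : Set ℕ)ᶜ ∩ Set.Iio n).ncard : ℝ) / n = 0 := by
    intro n; simp
  simpa [this] using tendsto_const_nhds


/-! #### log primrec -/


private def logF : ℕ → ℕ :=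
  fun n => Nat.rec 0 (fun k ih => if 2 ^ (ih + 1) ≤ k + 1 then ih + 1 else ih) n

lemma logF_eq : ∀ n, logF n = Nat.log 2 n := by
  intro n
  induction n with
  | zero => simp [logF]
  | succ n ih =>
    have hstep : logF (n + 1) =
        if 2 ^ (logF n + 1) ≤ n + 1 then logF n + 1 else logF n := rfl
    rw [hstep, ih]
    by_cases hc : 2 ^ (Nat.log 2 n + 1) ≤ n + 1
    · rw [if_pos hc]
      have h1 : Nat.log 2 n + 1 ≤ Nat.log 2 (n + 1) :=
        (Nat.le_log_iff_pow_le one_lt_two (Nat.succ_ne_zero n)).2 hc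
      have h2 : Nat.log 2 (n + 1) ≤ Nat.log 2 n + 1 := by
        by_contra h
        push_neg at h
        have h3 : 2 ^ (Nat.log 2 n + 2) ≤ 2 ^ (Nat.log 2 (n + 1)) :=
          Nat.pow_le_pow_right (by norm_num) h
        have h4 : 2 ^ (Nat.log 2 (n + 1)) ≤ n + 1 :=
          Nat.pow_log_le_self 2 (Nat.succ_ne_zero n)
        have h5 : 2 ^ (Nat.log 2 n + 1) < 2 ^ (Nat.log 2 n + 2) :=
          Nat.pow_lt_pow_right one_lt_two (by omega)
        have h6 : 2 ^ (Nat.log 2 n + 1) ≤ n := by omega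
        have hn0 : n ≠ 0 := by
          rintro rfl
          simp at h6
        have := (Nat.le_log_iff_pow_le one_lt_two hn0).2 h6
        omega
      omega
    · rw [if_neg hc]
      have h1 : Nat.log 2 n ≤ Nat.log 2 (n + 1) := Nat.log_mono_right (Nat.le_succ n)
      have h2 : Nat.log 2 (n + 1) ≤ Nat.log 2 n := by
        by_contra h
        push_neg at h
        have h3 : 2 ^ (Nat.log 2 n + 1) ≤ 2 ^ (Nat.log 2 (n + 1)) :=
          Nat.pow_le_pow_right (by norm_num) h
        have h4 : 2 ^ (Nat.log 2 (n + 1)) ≤ n + 1 :=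
          Nat.pow_log_le_self 2 (Nat.succ_ne_zero n)
        exact hc (le_trans h3 h4)
      omega

lemma primrec_pow2 : Primrec (fun k : ℕ => 2 ^ k) := by
  have h : Primrec₂ (· ^ · : ℕ → ℕ → ℕ) := Primrec₂.unpaired'.1 Nat.Primrec.pow
  exact h.comp (Primrec.const 2) Primrec.id

lemma primrec_log2 : Primrec (Nat.log 2) := by
  have h : Primrec logF := by
    apply Primrec.nat_rec₁ (f := fun k ih => if 2 ^ (ih + 1) ≤ k + 1 then ih + 1 else ih) 0
    apply Primrec.ite
    · exact PrimrecRel.comp Primrec.nat_le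
        (primrec_pow2.comp (Primrec.succ.comp Primrec.snd))
        (Primrec.succ.comp Primrec.fst)
    · exact Primrec.succ.comp Primrec.snd
    · exact Primrec.snd
  exact h.of_eq logF_eq


lemma sq_lt_pow2 : ∀ k : ℕ, 6 ≤ k → (k + 1) ^ 2 ≤ 2 ^ k := by
  intro k hk
  induction k with
  | zero => omega
  | succ k ih =>
    rcases Nat.lt_or_ge k 6 with h | h
    · interval_cases k <;> simp_all <;> omega
    · have h1 := ih (by omega)
      have : (k + 2) ^ 2 ≤ 2 * (k + 1) ^ 2 := by nlinarith
      calc (k + 2) ^ 2 ≤ 2 * (k + 1) ^ 2 := this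
        _ ≤ 2 * 2 ^ k := by omega
        _ = 2 ^ (k + 1) := by ring

lemma log_succ_le_sqrt {n : ℕ} (hn : 64 ≤ n) : Nat.log 2 n + 1 ≤ Nat.sqrt n := by
  have hn0 : n ≠ 0 := by omega
  have h6 : 6 ≤ Nat.log 2 n := by
    have : (2:ℕ) ^ 6 ≤ n := by norm_num; omega
    exact (Nat.le_log_iff_pow_le one_lt_two hn0).2 this
  have h1 : (Nat.log 2 n + 1) ^ 2 ≤ 2 ^ (Nat.log 2 n) := sq_lt_pow2 _ h6
  have h2 : 2 ^ (Nat.log 2 n) ≤ n := Nat.pow_log_le_self 2 hn0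
  exact Nat.le_sqrt.2 (by nlinarith)

lemma tendsto_sqrt_atTop : Tendsto Nat.sqrt atTop atTop := by
  apply tendsto_atTop_atTop.2
  intro b
  exact ⟨b ^ 2, fun a ha => by
    calc b = Nat.sqrt (b ^ 2) := (Nat.sqrt_eq' b).symm
      _ ≤ Nat.sqrt a := Nat.sqrt_le_sqrt ha⟩

lemma tendsto_inv_sqrt : Tendsto (fun n : ℕ => ((Nat.sqrt n : ℝ))⁻¹) atTop (𝓝 0) := by
  apply Filter.Tendsto.inv_tendsto_atTop
  exact tendsto_natCast_atTop_atTop.comp tendsto_sqrt_atTop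

lemma tendsto_log_div : Tendsto (fun n : ℕ => ((Nat.log 2 n + 1 : ℕ) : ℝ) / n) atTop (𝓝 0) := by
  apply squeeze_zero' (g := fun n : ℕ => ((Nat.sqrt n : ℝ))⁻¹)
  · filter_upwards [eventually_ge_atTop 1] with n hn
    positivity
  · filter_upwards [eventually_ge_atTop 64] with n hn
    have h1 : Nat.log 2 n + 1 ≤ Nat.sqrt n := log_succ_le_sqrt hn
    have h2 : (Nat.sqrt n : ℝ) * Nat.sqrt n ≤ n := by
      exact_mod_cast Nat.sqrt_le n
    have h3 : (0:ℝ) < Nat.sqrt n := by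
      have : 8 ≤ Nat.sqrt n := by
        have : (8:ℕ) = Nat.sqrt 64 := by norm_num
        rw [this]; exact Nat.sqrt_le_sqrt hn
      exact_mod_cast by omega
    have h4 : (0:ℝ) < n := by exact_mod_cast by omega
    rw [div_le_iff₀ h4, inv_mul_eq_div, le_div_iff₀ h3]
    calc ((Nat.log 2 n + 1 : ℕ) : ℝ) * Nat.sqrt n ≤ (Nat.sqrt n : ℝ) * Nat.sqrt n := by
          apply mul_le_mul_of_nonneg_right _ (le_of_lt h3)
          exact_mod_cast h1
      _ ≤ n := h2
  · exact tendsto_inv_sqrt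

lemma pow2_count_le (n : ℕ) :
    ({m : ℕ | 2 ^ Nat.log 2 m = m} ∩ Set.Iio n).ncard ≤ Nat.log 2 n + 1 := by
  have hsub : {m : ℕ | 2 ^ Nat.log 2 m = m} ∩ Set.Iio n ⊆
      (fun k => 2 ^ k) '' Set.Iic (Nat.log 2 n) := by
    rintro m ⟨hm, hmn⟩
    refine ⟨Nat.log 2 m, ?_, hm⟩
    simp only [Set.mem_Iic]
    exact Nat.log_mono_right (le_of_lt hmn)
  calc ({m : ℕ | 2 ^ Nat.log 2 m = m} ∩ Set.Iio n).ncard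
      ≤ ((fun k => 2 ^ k) '' Set.Iic (Nat.log 2 n)).ncard := by
        exact Set.ncard_le_ncard hsub ((Set.finite_Iic _).image _)
    _ ≤ (Set.Iic (Nat.log 2 n)).ncard := Set.ncard_image_le (Set.finite_Iic _)
    _ = Nat.log 2 n + 1 := by
        rw [← Finset.coe_Iic, Set.ncard_coe_finset, Nat.card_Iic]

lemma density1_nonpow : Density1 {m : ℕ | 2 ^ Nat.log 2 m ≠ m} := by
  rw [density1_iff_compl]
  have hc : {m : ℕ | 2 ^ Nat.log 2 m ≠ m}ᶜ = {m : ℕ | 2 ^ Nat.log 2 m = m} := by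
    ext m; simp
  rw [hc]
  apply squeeze_zero' (g := fun n : ℕ => ((Nat.log 2 n + 1 : ℕ) : ℝ) / n)
  · filter_upwards [eventually_ge_atTop 1] with n hn
    positivity
  · filter_upwards [eventually_ge_atTop 1] with n hn
    gcongr
    exact_mod_cast pow2_count_le n
  · exact tendsto_log_div


lemma density1_hits {S : Set ℕ} (h : Density1 S) :
    ∀ᶠ k : ℕ in atTop, ∃ n, n ∈ S ∧ 2 ^ k ≤ n ∧ n < 2 ^ (k + 1) := by
  rw [density1_iff_compl] at h
  by_contra hcon
  rw [Filter.not_eventually] at hcon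
  have hhalf : ∀ᶠ n : ℕ in atTop, ((Sᶜ ∩ Set.Iio n).ncard : ℝ) / n < 1 / 2 := by
    have := h.eventually (gt_mem_nhds (by norm_num : (0:ℝ) < 1/2))
    exact this
  rw [eventually_atTop] at hhalf
  obtain ⟨N, hN⟩ := hhalf
  rw [Filter.frequently_atTop] at hcon
  obtain ⟨k, hkN, hk⟩ := hcon N
  push_neg at hk
  have hsub : Set.Ico (2 ^ k) (2 ^ (k + 1)) ⊆ Sᶜ ∩ Set.Iio (2 ^ (k + 1)) := by
    rintro n ⟨h1, h2⟩
    exact ⟨fun hn => absurd (hk n hn h1) (by omega), h2⟩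
  have hcard : (2:ℕ) ^ k ≤ (Sᶜ ∩ Set.Iio (2 ^ (k + 1))).ncard := by
    have h1 : (Set.Ico (2 ^ k) (2 ^ (k + 1))).ncard = 2 ^ k := by
      rw [← Finset.coe_Ico, Set.ncard_coe_finset, Nat.card_Ico]
      have : (2:ℕ) ^ (k + 1) = 2 ^ k * 2 := by ring
      omega
    rw [← h1]
    exact Set.ncard_le_ncard hsub ((Set.finite_Iio _).inter_of_right _)
  have hNle : N ≤ 2 ^ (k + 1) := le_trans hkN (le_trans (Nat.le_of_lt Nat.lt_two_pow_self) (le_of_lt (Nat.pow_lt_pow_right one_lt_two (Nat.lt_succ_self k))))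
  have := hN (2 ^ (k + 1)) hNle
  have hge : (1:ℝ) / 2 ≤ ((Sᶜ ∩ Set.Iio (2 ^ (k + 1))).ncard : ℝ) / (2 ^ (k + 1) : ℕ) := by
    rw [le_div_iff₀ (by positivity)]
    have h2 : ((2:ℝ)) ^ k ≤ ((Sᶜ ∩ Set.Iio (2 ^ (k + 1))).ncard : ℝ) := by
      exact_mod_cast hcard
    have h3 : (2:ℝ) ^ (k + 1) = 2 * 2 ^ k := by ring
    push_cast
    linarith
  linarith

end Aux

section Construction

open Nat.Partrec (Code)
open Nat.Partrec.Code

/-- The halting set. -/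
def Kset : Set ℕ := {k | ((Denumerable.ofNat Code k).eval 0).Dom}

/-- The set `A`: dyadically padded halting set. -/
def Aset : Set ℕ := {n | Nat.log 2 n ∈ Kset}

/-- The set `B`: sparsely coded halting set. -/
def Bset : Set ℕ := {m | ∃ k ∈ Kset, m = 2 ^ k}

lemma pow_mem_Bset_iff (k : ℕ) : 2 ^ k ∈ Bset ↔ k ∈ Kset := by
  constructor
  · rintro ⟨k', hk', he⟩
    have : k' = k := Nat.pow_right_injective (le_refl 2) he.symm
    rwa [← this]
  · intro hk; exact ⟨k, hk, rfl⟩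

lemma mem_Aset_iff_pow_mem (n : ℕ) : n ∈ Aset ↔ 2 ^ Nat.log 2 n ∈ Bset := by
  rw [pow_mem_Bset_iff]; rfl

/-- The functional reducing `A` to `B`. -/
def φ₁ : TuringFunctional where
  f := fun σ n => ((σ[2 ^ Nat.log 2 n]? : Option ℕ) : Part ℕ)
  computable := by
    have h : Primrec fun p : List ℕ × ℕ => p.1[2 ^ Nat.log 2 p.2]? :=
      Primrec.list_getElem?.comp Primrec.fst
        (primrec_pow2.comp (primrec_log2.comp Primrec.snd))
    exact Computable.ofOption h.to_comp
  mono := by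
    intro σ τ hpre n m hm
    simp only [Part.mem_ofOption] at hm ⊢
    rw [List.prefix_iff_eq_take] at hpre
    have hlt : 2 ^ Nat.log 2 n < σ.length := by
      by_contra h
      push_neg at h
      rw [List.getElem?_eq_none h] at hm
      simp at hm
    rw [hpre] at hm
    rw [List.getElem?_take] at hm
    simpa [hlt] using hm

lemma φ₁_eval (n : ℕ) : setChar Aset n ∈ φ₁.evalSet Bset n := by
  rw [TuringFunctional.evalSet, mem_eval_iff]
  refine ⟨2 ^ Nat.log 2 n + 1, ?_⟩
  show setChar Aset n ∈ (((oracleSeg (setChar Bset) (2 ^ Nat.log 2 n + 1))[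
      2 ^ Nat.log 2 n]? : Option ℕ) : Part ℕ)
  rw [oracleSeg_getElem? _ (Nat.lt_succ_self _)]
  have : setChar Bset (2 ^ Nat.log 2 n) = setChar Aset n := by
    simp only [setChar]
    by_cases h : n ∈ Aset
    · rw [if_pos ((mem_Aset_iff_pow_mem n).1 h), if_pos h]
    · rw [if_neg (fun hc => h ((mem_Aset_iff_pow_mem n).2 hc)), if_neg h]
  rw [this]
  simp

lemma B_genComputes_A : GenericallyComputes Bset Aset := by
  refine ⟨φ₁, ?_, ?_⟩
  · have : PFun.Dom (φ₁.evalSet Bset) = Set.univ := by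
      apply Set.eq_univ_iff_forall.2
      intro n
      exact Part.dom_iff_mem.2 ⟨_, φ₁_eval n⟩
    rw [this]
    exact density1_univ
  · intro n m hm
    have := Part.mem_unique hm (φ₁_eval n)
    subst this
    by_cases h : n ∈ Aset
    · left; exact ⟨h, by simp [setChar, h]⟩
    · right; exact ⟨h, by simp [setChar, h]⟩

/-- The functional computing `B` generically with no oracle. -/
def φ₂ : TuringFunctional where
  f := fun _ n => if 2 ^ Nat.log 2 n = n then Part.none else Part.some 0
  computable := by
    have h : Primrec fun p : List ℕ × ℕ =>
        if 2 ^ Nat.log 2 p.2 = p.2 then (none : Option ℕ) else some 0 := by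
      apply Primrec.ite
      · exact PrimrecRel.comp Primrec.eq
          (primrec_pow2.comp (primrec_log2.comp Primrec.snd)) Primrec.snd
      · exact Primrec.const none
      · exact Primrec.const (some 0)
    have := Computable.ofOption h.to_comp
    apply this.of_eq
    intro p
    by_cases hc : 2 ^ Nat.log 2 p.2 = p.2 <;> simp [hc]
  mono := fun σ τ _ n m hm => hm

lemma φ₂_eval_cases (n m : ℕ) (hm : m ∈ φ₂.evalSet (∅ : Set ℕ) n) :
    m = 0 ∧ 2 ^ Nat.log 2 n ≠ n := by
  rw [TuringFunctional.evalSet, mem_eval_iff] at hm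
  obtain ⟨j, hj⟩ := hm
  change m ∈ (if 2 ^ Nat.log 2 n = n then Part.none else Part.some 0) at hj
  by_cases hc : 2 ^ Nat.log 2 n = n
  · rw [if_pos hc] at hj
    simp at hj
  · rw [if_neg hc, Part.mem_some_iff] at hj
    exact ⟨hj, hc⟩

lemma C_genComputes_B : GenericallyComputes (∅ : Set ℕ) Bset := by
  refine ⟨φ₂, ?_, ?_⟩
  · have hdom : PFun.Dom (φ₂.evalSet (∅ : Set ℕ)) = {n : ℕ | 2 ^ Nat.log 2 n ≠ n} := by
      ext n
      simp only [PFun.dom_mk, PFun.mem_dom]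
      constructor
      · rintro ⟨m, hm⟩
        exact (φ₂_eval_cases n m hm).2
      · intro h
        refine ⟨0, ?_⟩
        rw [TuringFunctional.evalSet, mem_eval_iff]
        refine ⟨0, ?_⟩
        simp only [φ₂, if_neg h]
        simp
    rw [hdom]
    exact density1_nonpow
  · intro n m hm
    obtain ⟨hm0, hne⟩ := φ₂_eval_cases n m hm
    right
    refine ⟨?_, hm0⟩
    rintro ⟨k, _, rfl⟩
    exact hne (by rw [Nat.log_pow one_lt_two])

end Construction

section Negative

open Nat.Partrec (Code)
open Nat.Partrec.Code

lemma oracleSeg_empty (j : ℕ) : oracleSeg (setChar (∅ : Set ℕ)) j = List.replicate j 0 := by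
  rw [oracleSeg]
  have h : (fun i : Fin j => setChar (∅ : Set ℕ) i) = fun _ : Fin j => (0:ℕ) := by
    funext i; simp [setChar]
  rw [h, List.ofFn_const]

lemma A_not_genComputable : ¬ GenericallyComputes (∅ : Set ℕ) Aset := by
  classical
  rintro ⟨φ, hdom, hcorr⟩
  have hpc : Nat.Partrec fun n =>
      Part.bind ((Encodable.decode (α := List ℕ × ℕ) n : Option (List ℕ × ℕ)) : Part (List ℕ × ℕ))
      (fun p => (φ.f p.1 p.2).map Encodable.encode) := φ.computable
  obtain ⟨c, hc⟩ := exists_code.1 hpc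
  have key : ∀ (σ : List ℕ) (n m : ℕ),
      m ∈ Code.eval c (Encodable.encode (σ, n)) ↔ m ∈ φ.f σ n := by
    intro σ n m
    rw [hc]
    simp [Encodable.encodek, Part.mem_map_iff]
  have hhits := density1_hits hdom
  rw [eventually_atTop] at hhits
  obtain ⟨k1, hk1⟩ := hhits
  set o : ℕ → ℕ → Option ℕ := fun k s =>
    if s.unpair.1 < 2 ^ k then
      evaln s.unpair.2.unpair.2 c
        (Encodable.encode (List.replicate s.unpair.2.unpair.1 (0:ℕ), 2 ^ k + s.unpair.1))
    else none with ho
  have ho_comp : Computable₂ o := by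
    apply Primrec₂.to_comp
    have hi : Primrec fun q : ℕ × ℕ => q.2.unpair.1 :=
      Primrec.fst.comp (Primrec.unpair.comp Primrec.snd)
    have hj : Primrec fun q : ℕ × ℕ => q.2.unpair.2.unpair.1 :=
      Primrec.fst.comp (Primrec.unpair.comp (Primrec.snd.comp (Primrec.unpair.comp Primrec.snd)))
    have ht : Primrec fun q : ℕ × ℕ => q.2.unpair.2.unpair.2 :=
      Primrec.snd.comp (Primrec.unpair.comp (Primrec.snd.comp (Primrec.unpair.comp Primrec.snd)))
    have hpk : Primrec fun q : ℕ × ℕ => 2 ^ q.1 := primrec_pow2.comp Primrec.fst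
    have hrep : Primrec fun q : ℕ × ℕ => List.replicate q.2.unpair.2.unpair.1 (0:ℕ) := by
      have h1 : Primrec fun q : ℕ × ℕ => (List.range q.2.unpair.2.unpair.1).map
          (fun _ => (0:ℕ)) :=
        Primrec.list_map (Primrec.list_range.comp hj) (Primrec.const 0)
      apply h1.of_eq
      intro q
      rw [List.map_const', List.length_range]
    have hn : Primrec fun q : ℕ × ℕ => 2 ^ q.1 + q.2.unpair.1 :=
      Primrec.nat_add.comp hpk hi
    have henc : Primrec fun q : ℕ × ℕ =>
        Encodable.encode (List.replicate q.2.unpair.2.unpair.1 (0:ℕ), 2 ^ q.1 + q.2.unpair.1) :=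
      Primrec.encode.comp (hrep.pair hn)
    have heval : Primrec fun q : ℕ × ℕ => evaln q.2.unpair.2.unpair.2 c
        (Encodable.encode (List.replicate q.2.unpair.2.unpair.1 (0:ℕ), 2 ^ q.1 + q.2.unpair.1)) :=
      primrec_evaln.comp ((ht.pair (Primrec.const c)).pair henc)
    exact Primrec.ite (PrimrecRel.comp Primrec.nat_lt hi hpk) heval (Primrec.const none)
  set p : ℕ →. ℕ := fun k => Nat.rfindOpt (o k) with hp
  have hp_part : Partrec p := Partrec.rfindOpt ho_comp
  have sound : ∀ k m, m ∈ p k → ((k ∈ Kset ∧ m = 1) ∨ (k ∉ Kset ∧ m = 0)) := by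
    intro k m hm
    obtain ⟨s, hs⟩ := Nat.rfindOpt_spec hm
    change m ∈ (if s.unpair.1 < 2 ^ k then
      evaln s.unpair.2.unpair.2 c
        (Encodable.encode (List.replicate s.unpair.2.unpair.1 (0:ℕ), 2 ^ k + s.unpair.1))
      else none) at hs
    by_cases hi : s.unpair.1 < 2 ^ k
    · rw [if_pos hi] at hs
      have h1 := evaln_sound hs
      rw [key] at h1
      have h2 : m ∈ φ.eval (setChar (∅ : Set ℕ)) (2 ^ k + s.unpair.1) := by
        rw [mem_eval_iff]
        exact ⟨s.unpair.2.unpair.1, by rwa [oracleSeg_empty]⟩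
      have hlog : Nat.log 2 (2 ^ k + s.unpair.1) = k := by
        apply Nat.log_eq_of_pow_le_of_lt_pow (Nat.le_add_right _ _)
        have : (2:ℕ) ^ (k + 1) = 2 ^ k + 2 ^ k := by ring
        omega
      have hA : (2 ^ k + s.unpair.1) ∈ Aset ↔ k ∈ Kset := by
        rw [Aset, Set.mem_setOf_eq, hlog]
      rcases hcorr _ m h2 with ⟨ha, hm1⟩ | ⟨ha, hm0⟩
      · exact Or.inl ⟨hA.1 ha, hm1⟩
      · exact Or.inr ⟨fun hk => ha (hA.2 hk), hm0⟩
    · rw [if_neg hi] at hs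
      simp at hs
  have total : ∀ k, k1 ≤ k → (p k).Dom := by
    intro k hk
    obtain ⟨n, hnS, hn1, hn2⟩ := hk1 k hk
    obtain ⟨m, hm⟩ := Part.dom_iff_mem.1 hnS
    rw [TuringFunctional.evalSet, mem_eval_iff] at hm
    obtain ⟨j, hj⟩ := hm
    rw [oracleSeg_empty] at hj
    have h1 : m ∈ Code.eval c (Encodable.encode (List.replicate j (0:ℕ), n)) := (key _ _ _).2 hj
    obtain ⟨t, ht⟩ := evaln_complete.1 h1
    apply Nat.rfindOpt_dom.2
    refine ⟨Nat.pair (n - 2 ^ k) (Nat.pair j t), m, ?_⟩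
    have hilt : n - 2 ^ k < 2 ^ k := by
      have : (2:ℕ) ^ (k + 1) = 2 ^ k + 2 ^ k := by ring
      omega
    change m ∈ (if (Nat.pair (n - 2 ^ k) (Nat.pair j t)).unpair.1 < 2 ^ k then
      evaln (Nat.pair (n - 2 ^ k) (Nat.pair j t)).unpair.2.unpair.2 c
        (Encodable.encode (List.replicate (Nat.pair (n - 2 ^ k) (Nat.pair j t)).unpair.2.unpair.1 (0:ℕ),
          2 ^ k + (Nat.pair (n - 2 ^ k) (Nat.pair j t)).unpair.1))
      else none)
    rw [Nat.unpair_pair]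
    simp only [Nat.unpair_pair]
    rw [if_pos hilt, Nat.add_sub_cancel' hn1]
    exact ht
  set Lst : List Bool := (List.range k1).map (fun k => decide (k ∈ Kset)) with hL
  set F : ℕ →. Bool := fun k => bif decide (k < k1) then Part.some (Lst.getD k false)
    else (p k).map (fun m => m == 1) with hF
  have hF_part : Partrec F := by
    apply Partrec.cond
    · exact (PrimrecRel.comp Primrec.nat_lt Primrec.id (Primrec.const k1)).decide.to_comp
    · have h1 : Computable fun k : ℕ => Lst.getD k false :=
        ((Primrec.list_getD false).comp (Primrec.const Lst) Primrec.id).to_comp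
      exact h1.partrec
    · exact hp_part.map ((Primrec.beq.comp Primrec.snd (Primrec.const 1)).to_comp)
  have hF_tot : ∀ k, decide (k ∈ Kset) ∈ F k := by
    intro k
    by_cases hk : k < k1
    · have : F k = Part.some (Lst.getD k false) := by
        rw [hF]; simp [hk]
      rw [this, hL]
      simp [List.getD_eq_getElem?_getD, List.getElem?_map, List.getElem?_range, hk]
    · have hdomk := total k (le_of_not_gt hk)
      have : F k = (p k).map (fun m => m == 1) := by
        rw [hF]; simp [hk]
      rw [this, Part.mem_map_iff]
      refine ⟨(p k).get hdomk, Part.get_mem hdomk, ?_⟩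
      rcases sound k _ (Part.get_mem hdomk) with ⟨hkK, h1⟩ | ⟨hkK, h0⟩
      · rw [h1]; simp [hkK]
      · rw [h0]; simp [hkK]
  have hK_comp : Computable fun k => decide (k ∈ Kset) := hF_part.of_eq_tot hF_tot
  apply ComputablePred.halting_problem 0
  rw [ComputablePred.computable_iff]
  refine ⟨fun c' => decide (Encodable.encode c' ∈ Kset), hK_comp.comp Computable.encode, ?_⟩
  funext c'
  apply propext
  simp only [decide_eq_true_eq]
  rw [Kset, Set.mem_setOf_eq, Denumerable.ofNat_encode]

end Negative

/-- relative generic computation is not transitive. -/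
theorem generic_computation_not_transitive :
    ∃ A B C : Set ℕ, GenericallyComputes B A ∧ GenericallyComputes C B ∧
      ¬ GenericallyComputes C A :=
  ⟨Aset, Bset, ∅, B_genComputes_A, C_genComputes_B, A_not_genComputable⟩
end

section
/- Generic reducibility is transitive: if C ≥_g B and B ≥_g A, then C ≥_g A. -/
open Filter Topology

-- ===== auxiliary development =====
namespace GenTransAux

open Nat.Partrec (Code)
open Nat.Partrec.Code

lemma oracleSeg_eq_map (g : ℕ → ℕ) (k : ℕ) : oracleSeg g k = (List.range k).map g := by
  apply List.ext_getElem <;> simp [oracleSeg]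

lemma oracleSeg_length (g : ℕ → ℕ) (k : ℕ) : (oracleSeg g k).length = k := by
  simp [oracleSeg]

lemma oracleSeg_getD {g : ℕ → ℕ} {i K : ℕ} (h : i < K) :
    (oracleSeg g K).getD i 0 = g i := by
  rw [List.getD_eq_getElem _ _ (by simpa [oracleSeg_length] using h)]
  simp [oracleSeg]

lemma oracleSeg_prefix (g : ℕ → ℕ) {k l : ℕ} (h : k ≤ l) :
    oracleSeg g k <+: oracleSeg g l := by
  rw [oracleSeg_eq_map, oracleSeg_eq_map]
  refine List.IsPrefix.map _ ?_
  rw [show List.range k = (List.range l).take k by rw [List.take_range, min_eq_left h]]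
  exact List.take_prefix _ _

lemma mem_eval {φ : TuringFunctional} {X : ℕ → ℕ} {n m : ℕ} :
    m ∈ φ.eval X n ↔ ∃ k, m ∈ φ.f (oracleSeg X k) n := by
  constructor
  · rintro ⟨h, rfl⟩
    exact ⟨h.choose, h.choose_spec, rfl⟩
  · rintro ⟨k, hk⟩
    have hd : ∃ j, (φ.f (oracleSeg X j) n).Dom := ⟨k, hk.fst⟩
    refine ⟨hd, ?_⟩
    have h1 : (φ.f (oracleSeg X hd.choose) n).get hd.choose_spec
        ∈ φ.f (oracleSeg X hd.choose) n := Part.get_mem _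
    have h2 := φ.mono _ _ (oracleSeg_prefix X (le_max_left hd.choose k)) n _ h1
    have h3 := φ.mono _ _ (oracleSeg_prefix X (le_max_right hd.choose k)) n m hk
    exact Part.mem_unique h2 h3

lemma density1_mono {D E : Set ℕ} (h : D ⊆ E) (hD : Density1 D) : Density1 E := by
  have hIio : ∀ n : ℕ, (Set.Iio n).ncard = n := by
    intro n
    rw [← Finset.coe_Iio, Set.ncard_coe_finset, Nat.card_Iio]
  refine tendsto_of_tendsto_of_tendsto_of_le_of_le hD tendsto_const_nhds
    (fun n => ?_) (fun n => ?_)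
  · rcases Nat.eq_zero_or_pos n with rfl | hn
    · simp
    have hfin : (E ∩ Set.Iio n).Finite := (Set.finite_Iio n).inter_of_right _
    have hle : (D ∩ Set.Iio n).ncard ≤ (E ∩ Set.Iio n).ncard :=
      Set.ncard_le_ncard (Set.inter_subset_inter_left _ h) hfin
    have hpos : (0:ℝ) < n := by exact_mod_cast hn
    exact div_le_div_of_nonneg_right (Nat.cast_le.mpr hle) hpos.le
  · rcases Nat.eq_zero_or_pos n with rfl | hn
    · simp
    have hle : (E ∩ Set.Iio n).ncard ≤ n := by
      calc (E ∩ Set.Iio n).ncard ≤ (Set.Iio n).ncard :=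
            Set.ncard_le_ncard Set.inter_subset_right (Set.finite_Iio n)
        _ = n := hIio n
    have hpos : (0:ℝ) < n := by exact_mod_cast hn
    rw [div_le_one hpos]
    exact_mod_cast hle

/-- The bit computed from a finite oracle string. -/
def gbit (c : Code) (σ : List ℕ) (m : ℕ) : ℕ :=
  if evaln m.unpair.2.unpair.2.unpair.2 c
      (Nat.pair
        (Encodable.encode
          ((List.range m.unpair.2.unpair.2.unpair.1).map (fun i => σ.getD i 0)))
        m.unpair.1)
      = some m.unpair.2.unpair.1 then 1 else 0

def charSeg (c : Code) (σ : List ℕ) : List ℕ := (List.range σ.length).map (gbit c σ)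

/-- The derived generic oracle set. -/
def Oset (c : Code) (g : ℕ → ℕ) : Set ℕ :=
  {m | evaln m.unpair.2.unpair.2.unpair.2 c
      (Nat.pair (Encodable.encode (oracleSeg g m.unpair.2.unpair.2.unpair.1)) m.unpair.1)
      = some m.unpair.2.unpair.1}

lemma k_le (m : ℕ) : m.unpair.2.unpair.2.unpair.1 ≤ m :=
  le_trans (Nat.unpair_left_le _)
    (le_trans (Nat.unpair_right_le _) (Nat.unpair_right_le _))

lemma gbit_prefix (c : Code) {σ τ : List ℕ} (h : σ <+: τ) {m : ℕ} (hm : m < σ.length) :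
    gbit c σ m = gbit c τ m := by
  unfold gbit
  have hlist : (List.range m.unpair.2.unpair.2.unpair.1).map (fun i => σ.getD i 0)
      = (List.range m.unpair.2.unpair.2.unpair.1).map (fun i => τ.getD i 0) := by
    apply List.map_congr_left
    intro i hi
    have hi' : i < σ.length := lt_of_lt_of_le (List.mem_range.1 hi)
      (le_trans (k_le m) (le_of_lt hm))
    rw [List.getD_eq_getElem _ _ hi',
        List.getD_eq_getElem _ _ (lt_of_lt_of_le hi' h.length_le)]
    exact List.IsPrefix.getElem h hi'
  rw [hlist]

lemma charSeg_prefix (c : Code) {σ τ : List ℕ} (h : σ <+: τ) :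
    charSeg c σ <+: charSeg c τ := by
  have heq : charSeg c σ = (charSeg c τ).take σ.length := by
    unfold charSeg
    rw [← List.map_take, List.take_range, min_eq_left h.length_le]
    exact List.map_congr_left fun m hm => gbit_prefix c h (List.mem_range.1 hm)
  rw [heq]
  exact List.take_prefix _ _

set_option maxHeartbeats 1000000 in
lemma charSeg_oracleSeg (c : Code) (g : ℕ → ℕ) (K : ℕ) :
    charSeg c (oracleSeg g K) = oracleSeg (setChar (Oset c g)) K := by
  rw [oracleSeg_eq_map (setChar (Oset c g))]
  unfold charSeg
  rw [oracleSeg_length]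
  apply List.map_congr_left
  intro m hm
  have hmK : m < K := List.mem_range.1 hm
  have hlist : (List.range m.unpair.2.unpair.2.unpair.1).map
      (fun i => (oracleSeg g K).getD i 0) = oracleSeg g m.unpair.2.unpair.2.unpair.1 := by
    rw [oracleSeg_eq_map g m.unpair.2.unpair.2.unpair.1]
    apply List.map_congr_left
    intro i hi
    exact oracleSeg_getD (lt_of_lt_of_le (List.mem_range.1 hi)
      (le_trans (k_le m) (le_of_lt hmK)))
  have hmem : m ∈ Oset c g ↔
      evaln m.unpair.2.unpair.2.unpair.2 c
        (Nat.pair (Encodable.encode (oracleSeg g m.unpair.2.unpair.2.unpair.1)) m.unpair.1)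
      = some m.unpair.2.unpair.1 := Iff.rfl
  simp only [gbit, setChar, hlist]
  split_ifs with h1 h2 h2
  · rfl
  · exact absurd (hmem.2 h1) h2
  · exact absurd (hmem.1 h2) h1
  · rfl

lemma gbit_primrec (c : Code) : Primrec₂ (gbit c) := by
  have hm : Primrec fun p : List ℕ × ℕ => p.2 := Primrec.snd
  have hu : Primrec fun p : List ℕ × ℕ => p.2.unpair :=
    Primrec.unpair.comp hm
  have hn : Primrec fun p : List ℕ × ℕ => p.2.unpair.1 := Primrec.fst.comp hu
  have hu2 : Primrec fun p : List ℕ × ℕ => p.2.unpair.2 := Primrec.snd.comp hu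
  have hx : Primrec fun p : List ℕ × ℕ => p.2.unpair.2.unpair.1 :=
    Primrec.fst.comp (Primrec.unpair.comp hu2)
  have hu3 : Primrec fun p : List ℕ × ℕ => p.2.unpair.2.unpair.2 :=
    Primrec.snd.comp (Primrec.unpair.comp hu2)
  have hk : Primrec fun p : List ℕ × ℕ => p.2.unpair.2.unpair.2.unpair.1 :=
    Primrec.fst.comp (Primrec.unpair.comp hu3)
  have hs : Primrec fun p : List ℕ × ℕ => p.2.unpair.2.unpair.2.unpair.2 :=
    Primrec.snd.comp (Primrec.unpair.comp hu3)
  have hgetD : Primrec₂ fun (p : List ℕ × ℕ) (i : ℕ) => p.1.getD i 0 :=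
    (Primrec.list_getD 0).comp (Primrec.fst.comp Primrec.fst) Primrec.snd
  have htake : Primrec fun p : List ℕ × ℕ =>
      (List.range p.2.unpair.2.unpair.2.unpair.1).map (fun i => p.1.getD i 0) :=
    Primrec.list_map (Primrec.list_range.comp hk) hgetD
  have hinput : Primrec fun p : List ℕ × ℕ =>
      Nat.pair (Encodable.encode
        ((List.range p.2.unpair.2.unpair.2.unpair.1).map (fun i => p.1.getD i 0)))
        p.2.unpair.1 :=
    Primrec₂.natPair.comp (Primrec.encode.comp htake) hn
  have hev : Primrec fun p : List ℕ × ℕ =>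
      evaln p.2.unpair.2.unpair.2.unpair.2 c
        (Nat.pair (Encodable.encode
          ((List.range p.2.unpair.2.unpair.2.unpair.1).map (fun i => p.1.getD i 0)))
          p.2.unpair.1) :=
    primrec_evaln.comp ((hs.pair (Primrec.const c)).pair hinput)
  have hcond : PrimrecPred fun p : List ℕ × ℕ =>
      evaln p.2.unpair.2.unpair.2.unpair.2 c
        (Nat.pair (Encodable.encode
          ((List.range p.2.unpair.2.unpair.2.unpair.1).map (fun i => p.1.getD i 0)))
          p.2.unpair.1) = some p.2.unpair.2.unpair.1 :=
    Primrec.eq.comp hev (Primrec.option_some.comp hx)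
  exact Primrec.ite hcond (Primrec.const 1) (Primrec.const 0)

lemma charSeg_computable (c : Code) : Computable (charSeg c) :=
  (Primrec.list_map (Primrec.list_range.comp Primrec.list_length)
    (gbit_primrec c)).to_comp

end GenTransAux


open GenTransAux Nat.Partrec.Code

/-- STATEMENT 9 proof -/
theorem genRedTo_trans (A B C : Set ℕ) (hBC : GenRedTo B C) (hAB : GenRedTo A B) :
    GenRedTo A C := by
  obtain ⟨φ, hφ⟩ := hBC
  obtain ⟨ψ, hψ⟩ := hAB
  obtain ⟨c, hc⟩ := Nat.Partrec.Code.exists_code.1 φ.computable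
  have hceval : ∀ (σ : List ℕ) (n x : ℕ),
      x ∈ eval c (Nat.pair (Encodable.encode σ) n) ↔ x ∈ φ.f σ n := by
    intro σ n x
    have henc : Nat.pair (Encodable.encode σ) n = Encodable.encode (σ, n) := by
      simp [Encodable.encode_prod_val]
    rw [henc, hc]
    simp [Encodable.encodek]
  -- the composed functional
  refine ⟨⟨fun σ n => ψ.f (charSeg c σ) n, ?_, ?_⟩, ?_⟩
  · exact Partrec₂.comp ψ.computable
      ((charSeg_computable c).comp Computable.fst) Computable.snd
  · intro σ τ hpre n m hm
    exact ψ.mono _ _ (charSeg_prefix c hpre) n m hm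
  · intro O hO
    set g := setChar O with hg
    set O' := Oset c g with hO'def
    have hgenB : IsGenericComputation (φ.evalSet O) B := hφ O hO
    -- O' is a generic oracle for B
    have hpart : IsPartialOracle O' B := by
      constructor
      · intro n l hmem
        have hev : (0:ℕ) ∈ φ.eval g n := by
          simp only [hO'def, Oset, Set.mem_setOf_eq, Nat.unpair_pair] at hmem
          refine mem_eval.2 ⟨l.unpair.1, ?_⟩
          exact (hceval _ _ _).1 (evaln_sound hmem)
        rcases hgenB.2 n 0 hev with ⟨_, h01⟩ | ⟨hnB, _⟩
        · exact absurd h01 (by norm_num)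
        · exact hnB
      · intro n l hmem
        have hev : (1:ℕ) ∈ φ.eval g n := by
          simp only [hO'def, Oset, Set.mem_setOf_eq, Nat.unpair_pair] at hmem
          refine mem_eval.2 ⟨l.unpair.1, ?_⟩
          exact (hceval _ _ _).1 (evaln_sound hmem)
        rcases hgenB.2 n 1 hev with ⟨hnB, _⟩ | ⟨_, h10⟩
        · exact hnB
        · exact absurd h10 (by norm_num)
    have hdom : (φ.evalSet O).Dom ⊆ oracleDomain O' := by
      intro n hn
      obtain ⟨x, hx⟩ := Part.dom_iff_mem.1 hn
      obtain ⟨k, hk⟩ := mem_eval.1 hx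
      obtain ⟨s, hs⟩ := evaln_complete.1 ((hceval _ _ _).2 hk)
      refine ⟨x, Nat.pair k s, ?_⟩
      simp only [hO'def, Oset, Set.mem_setOf_eq, Nat.unpair_pair]
      exact Option.mem_def.1 hs
    have hO'gen : IsGenericOracle O' B := ⟨hpart, density1_mono hdom hgenB.1⟩
    have hkey : (TuringFunctional.mk (fun σ n => ψ.f (charSeg c σ) n)
        (Partrec₂.comp ψ.computable
          ((charSeg_computable c).comp Computable.fst) Computable.snd)
        (fun σ τ hpre n m hm => ψ.mono _ _ (charSeg_prefix c hpre) n m hm)).evalSet O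
        = ψ.evalSet O' := by
      funext n
      apply Part.ext
      intro m
      rw [TuringFunctional.evalSet, TuringFunctional.evalSet, mem_eval, mem_eval]
      constructor
      · rintro ⟨k, hk⟩
        refine ⟨k, ?_⟩
        rw [hO'def, ← charSeg_oracleSeg c g k]
        exact hk
      · rintro ⟨k, hk⟩
        refine ⟨k, ?_⟩
        show m ∈ ψ.f (charSeg c (oracleSeg (setChar O) k)) n
        rw [charSeg_oracleSeg c g k]
        rw [hO'def] at hk
        exact hk
    rw [hkey]
    exact hψ O' hO'gen
end
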